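/- In a Boolean inverse semigroup, if t ≤ s and v ≤ u then (s∖t)(u∖v) = su∖(sv ∨ tu). -/
import Mathlib


/-- An inverse semigroup: every element has a unique (generalized) inverse. -/
class InverseSemigroup (S : Type*) extends Semigroup S, Inv S where
  mul_inv_mul : ∀ s : S, s * s⁻¹ * s = s
  inv_mul_inv : ∀ s : S, s⁻¹ * s * s⁻¹ = s⁻¹
  inv_unique : ∀ s t : S, s * t * s = s → t * s * t = t → t = s⁻¹

/-- An inverse semigroup with a zero element. -/
class InverseSemigroupWithZero (S : Type*) extends InverseSemigroup S, Zero S where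
  zero_mul : ∀ s : S, 0 * s = 0
  mul_zero : ∀ s : S, s * 0 = 0

section Defs
variable {S : Type*}

/-- The natural partial order on an inverse semigroup: `a ≤ b` iff `a = b (a⁻¹ a)`. -/
def nle [InverseSemigroup S] (a b : S) : Prop := a = b * (a⁻¹ * a)

/-- Compatibility: `a⁻¹ b` and `a b⁻¹` are both idempotent. -/
def compat [InverseSemigroup S] (a b : S) : Prop :=
  IsIdempotentElem (a⁻¹ * b) ∧ IsIdempotentElem (a * b⁻¹)

/-- Orthogonality: `a⁻¹ b = 0 = a b⁻¹`. -/
def orth [InverseSemigroupWithZero S] (a b : S) : Prop := a⁻¹ * b = 0 ∧ a * b⁻¹ = 0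

/-- `u` is the least upper bound (join) of `a` and `b` in the natural partial order. -/
def isJoin [InverseSemigroup S] (u a b : S) : Prop :=
  nle a u ∧ nle b u ∧ ∀ c, nle a c → nle b c → nle u c

/-- `m` is the greatest lower bound (meet) of `a` and `b` in the natural partial order. -/
def isMeet [InverseSemigroup S] (m a b : S) : Prop :=
  nle m a ∧ nle m b ∧ ∀ c, nle c a → nle c b → nle c m

/-- `c = a ∖ b`: `c ≤ a`, `c ⊥ b` and `a = b ∨ c`. -/
def isDiff [InverseSemigroupWithZero S] (c a b : S) : Prop :=
  nle c a ∧ orth c b ∧ isJoin a b c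

end Defs

/-- A distributive inverse semigroup: compatible pairs have joins, and
multiplication distributes over such joins. -/
class DistributiveInverseSemigroup (S : Type*) extends InverseSemigroupWithZero S where
  join_exists : ∀ a b : S, compat a b → ∃ u, isJoin u a b
  mul_join_left : ∀ a b u c : S, isJoin u a b → isJoin (c * u) (c * a) (c * b)
  mul_join_right : ∀ a b u c : S, isJoin u a b → isJoin (u * c) (a * c) (b * c)

/-- A Boolean inverse semigroup: a distributive inverse semigroup whose idempotents
form a (generalized) Boolean algebra, i.e. relative complements of idempotents exist. -/
class BooleanInverseSemigroup (S : Type*) extends DistributiveInverseSemigroup S where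
  relcomp : ∀ e f : S, IsIdempotentElem e → IsIdempotentElem f → nle f e →
    ∃ c, IsIdempotentElem c ∧ isDiff c e f

section Lemmas

namespace BISAux

variable {S : Type*}

section IS
variable [InverseSemigroup S]

lemma mim (s : S) : s * s⁻¹ * s = s := InverseSemigroup.mul_inv_mul s
lemma imi (s : S) : s⁻¹ * s * s⁻¹ = s⁻¹ := InverseSemigroup.inv_mul_inv s

lemma inv_inv' (s : S) : s⁻¹⁻¹ = s :=
  (InverseSemigroup.inv_unique s⁻¹ s (imi s) (mim s)).symm

lemma idem_inv {e : S} (he : IsIdempotentElem e) : e⁻¹ = e :=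
  (InverseSemigroup.inv_unique e e (by rw [he.eq, he.eq]) (by rw [he.eq, he.eq])).symm

lemma idem_comm {e f : S} (he : IsIdempotentElem e) (hf : IsIdempotentElem f) :
    e * f = f * e := by
  have key : ∀ a b : S, IsIdempotentElem a → IsIdempotentElem b →
      IsIdempotentElem (a * b) := by
    intro a b ha hb
    set x := (a * b)⁻¹ with hx
    have h1 : (a * b) * (b * x * a) * (a * b) = a * b := by
      have h := mim (a * b)
      rw [← hx] at h
      calc (a * b) * (b * x * a) * (a * b)
          = a * ((b * b) * (x * ((a * a) * b))) := by simp only [mul_assoc]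
        _ = a * (b * (x * (a * b))) := by rw [ha.eq, hb.eq]
        _ = a * b := by simpa only [mul_assoc] using h
    have h2 : (b * x * a) * (a * b) * (b * x * a) = b * x * a := by
      have h := imi (a * b)
      rw [← hx] at h
      have h' : x * (a * (b * x)) = x := by simpa only [mul_assoc] using h
      calc (b * x * a) * (a * b) * (b * x * a)
          = b * (x * ((a * a) * ((b * b) * (x * a)))) := by simp only [mul_assoc]
        _ = b * (x * (a * (b * (x * a)))) := by rw [ha.eq, hb.eq]
        _ = b * ((x * (a * (b * x))) * a) := by simp only [mul_assoc]
        _ = b * (x * a) := by rw [h']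
        _ = b * x * a := by rw [mul_assoc]
    have hxeq : b * x * a = x := InverseSemigroup.inv_unique (a * b) (b * x * a) h1 h2
    have hxidem : IsIdempotentElem x := by
      have h := imi (a * b)
      rw [← hx] at h
      have h' : x * (a * (b * x)) = x := by simpa only [mul_assoc] using h
      show x * x = x
      conv_lhs => rw [← hxeq]
      calc (b * x * a) * (b * x * a)
          = b * ((x * (a * (b * x))) * a) := by simp only [mul_assoc]
        _ = b * (x * a) := by rw [h']
        _ = b * x * a := by rw [mul_assoc]
        _ = x := hxeq
    have : a * b = x := by
      rw [← inv_inv' (a * b), ← hx, idem_inv hxidem]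
    rw [this]; exact hxidem
  have hef : IsIdempotentElem (e * f) := key e f he hf
  have hfe : IsIdempotentElem (f * e) := key f e hf he
  -- f * e is an inverse of e * f, hence equals (e*f)⁻¹ = e*f
  have h1 : (e * f) * (f * e) * (e * f) = e * f := by
    calc (e * f) * (f * e) * (e * f)
        = e * ((f * f) * ((e * e) * f)) := by simp only [mul_assoc]
      _ = e * (f * (e * f)) := by rw [he.eq, hf.eq]
      _ = (e * f) * (e * f) := by simp only [mul_assoc]
      _ = e * f := hef.eq
  have h2 : (f * e) * (e * f) * (f * e) = f * e := by
    calc (f * e) * (e * f) * (f * e)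
        = f * ((e * e) * ((f * f) * e)) := by simp only [mul_assoc]
      _ = f * (e * (f * e)) := by rw [he.eq, hf.eq]
      _ = (f * e) * (f * e) := by simp only [mul_assoc]
      _ = f * e := hfe.eq
  have := InverseSemigroup.inv_unique (e * f) (f * e) h1 h2
  rw [this, idem_inv hef]

lemma idem_mul {e f : S} (he : IsIdempotentElem e) (hf : IsIdempotentElem f) :
    IsIdempotentElem (e * f) := by
  show (e * f) * (e * f) = e * f
  calc (e * f) * (e * f) = e * ((f * e) * f) := by simp only [mul_assoc]
    _ = e * ((e * f) * f) := by rw [idem_comm he hf]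
    _ = (e * e) * (f * f) := by simp only [mul_assoc]
    _ = e * f := by rw [he.eq, hf.eq]

lemma mul_inv_rev' (a b : S) : (a * b)⁻¹ = b⁻¹ * a⁻¹ := by
  have hii : IsIdempotentElem (a⁻¹ * a) := by
    show (a⁻¹ * a) * (a⁻¹ * a) = a⁻¹ * a
    calc (a⁻¹ * a) * (a⁻¹ * a) = (a⁻¹ * a * a⁻¹) * a := by simp only [mul_assoc]
      _ = a⁻¹ * a := by rw [imi]
  have hjj : IsIdempotentElem (b * b⁻¹) := by
    show (b * b⁻¹) * (b * b⁻¹) = b * b⁻¹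
    calc (b * b⁻¹) * (b * b⁻¹) = (b * b⁻¹ * b) * b⁻¹ := by simp only [mul_assoc]
      _ = b * b⁻¹ := by rw [mim]
  have h1 : (a * b) * (b⁻¹ * a⁻¹) * (a * b) = a * b := by
    calc (a * b) * (b⁻¹ * a⁻¹) * (a * b)
        = a * ((b * b⁻¹) * ((a⁻¹ * a) * b)) := by simp only [mul_assoc]
      _ = a * ((b * b⁻¹) * (a⁻¹ * a) * b) := by simp only [mul_assoc]
      _ = a * ((a⁻¹ * a) * (b * b⁻¹) * b) := by rw [idem_comm hjj hii]
      _ = (a * a⁻¹ * a) * (b * b⁻¹ * b) := by simp only [mul_assoc]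
      _ = a * b := by rw [mim, mim]
  have h2 : (b⁻¹ * a⁻¹) * (a * b) * (b⁻¹ * a⁻¹) = b⁻¹ * a⁻¹ := by
    calc (b⁻¹ * a⁻¹) * (a * b) * (b⁻¹ * a⁻¹)
        = b⁻¹ * ((a⁻¹ * a) * (b * b⁻¹) * a⁻¹) := by simp only [mul_assoc]
      _ = b⁻¹ * ((b * b⁻¹) * (a⁻¹ * a) * a⁻¹) := by rw [idem_comm hii hjj]
      _ = (b⁻¹ * b * b⁻¹) * (a⁻¹ * a * a⁻¹) := by simp only [mul_assoc]
      _ = b⁻¹ * a⁻¹ := by rw [imi, imi]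
  exact (InverseSemigroup.inv_unique (a * b) (b⁻¹ * a⁻¹) h1 h2).symm

lemma idem_inv_mul (a : S) : IsIdempotentElem (a⁻¹ * a) := by
  show (a⁻¹ * a) * (a⁻¹ * a) = a⁻¹ * a
  calc (a⁻¹ * a) * (a⁻¹ * a) = (a⁻¹ * a * a⁻¹) * a := by simp only [mul_assoc]
    _ = a⁻¹ * a := by rw [imi]

lemma idem_mul_inv (a : S) : IsIdempotentElem (a * a⁻¹) := by
  show (a * a⁻¹) * (a * a⁻¹) = a * a⁻¹
  calc (a * a⁻¹) * (a * a⁻¹) = (a * a⁻¹ * a) * a⁻¹ := by simp only [mul_assoc]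
    _ = a * a⁻¹ := by rw [mim]

lemma idem_conj {e : S} (he : IsIdempotentElem e) (x : S) :
    IsIdempotentElem (x * (e * x⁻¹)) := by
  show (x * (e * x⁻¹)) * (x * (e * x⁻¹)) = x * (e * x⁻¹)
  calc (x * (e * x⁻¹)) * (x * (e * x⁻¹))
      = x * (e * ((x⁻¹ * x) * (e * x⁻¹))) := by simp only [mul_assoc]
    _ = x * (e * ((x⁻¹ * x) * e * x⁻¹)) := by simp only [mul_assoc]
    _ = x * (e * (e * (x⁻¹ * x) * x⁻¹)) := by rw [idem_comm (idem_inv_mul x) he]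
    _ = x * ((e * e) * (x⁻¹ * x * x⁻¹)) := by simp only [mul_assoc]
    _ = x * (e * x⁻¹) := by rw [he.eq, imi]

/-- `e x = x (x⁻¹ (e x))` for idempotent `e`. -/
lemma idem_swap_right {e : S} (he : IsIdempotentElem e) (x : S) :
    e * x = x * (x⁻¹ * (e * x)) := by
  calc e * x = e * (x * x⁻¹ * x) := by rw [mim]
    _ = e * (x * x⁻¹) * x := by simp only [mul_assoc]
    _ = (x * x⁻¹) * e * x := by rw [idem_comm he (idem_mul_inv x)]
    _ = x * (x⁻¹ * (e * x)) := by simp only [mul_assoc]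

/-- `x e = ((x e) x⁻¹) x` for idempotent `e`. -/
lemma idem_swap_left {e : S} (he : IsIdempotentElem e) (x : S) :
    x * e = (x * (e * x⁻¹)) * x := by
  calc x * e = (x * x⁻¹ * x) * e := by rw [mim]
    _ = x * (x⁻¹ * x * e) := by simp only [mul_assoc]
    _ = x * (e * (x⁻¹ * x)) := by rw [idem_comm (idem_inv_mul x) he]
    _ = (x * (e * x⁻¹)) * x := by simp only [mul_assoc]

lemma nle_refl (a : S) : nle a a := by
  show a = a * (a⁻¹ * a)
  rw [← mul_assoc, mim]

lemma nle_of_mul_idem {a b g : S} (hg : IsIdempotentElem g) (h : a = b * g) :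
    nle a b := by
  show a = b * (a⁻¹ * a)
  have hainv : a⁻¹ = g * b⁻¹ := by rw [h, mul_inv_rev', idem_inv hg]
  calc a = b * g := h
    _ = b * (b⁻¹ * b) * g := by rw [← mul_assoc, mim]
    _ = b * ((b⁻¹ * b) * g) := by rw [mul_assoc]
    _ = b * ((b⁻¹ * b) * (g * g)) := by rw [hg.eq]
    _ = b * ((g * (b⁻¹ * b)) * g) := by
        rw [show (b⁻¹ * b) * (g * g) = ((b⁻¹ * b) * g) * g by simp only [mul_assoc],
          idem_comm (idem_inv_mul b) hg]
    _ = b * ((g * b⁻¹) * (b * g)) := by simp only [mul_assoc]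
    _ = b * (a⁻¹ * a) := by rw [← hainv, ← h]

lemma nle_of_idem_mul {a b g : S} (hg : IsIdempotentElem g) (h : a = g * b) :
    nle a b := by
  have hainv : a⁻¹ = b⁻¹ * g := by rw [h, mul_inv_rev', idem_inv hg]
  show a = b * (a⁻¹ * a)
  calc a = g * b := h
    _ = g * (b * b⁻¹ * b) := by rw [mim]
    _ = (g * (b * b⁻¹)) * b := by simp only [mul_assoc]
    _ = ((b * b⁻¹) * g) * b := by rw [idem_comm hg (idem_mul_inv b)]
    _ = b * (b⁻¹ * (g * b)) := by simp only [mul_assoc]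
    _ = b * (b⁻¹ * ((g * g) * b)) := by rw [hg.eq]
    _ = b * ((b⁻¹ * g) * (g * b)) := by simp only [mul_assoc]
    _ = b * (a⁻¹ * (g * b)) := by rw [← hainv]
    _ = b * (a⁻¹ * a) := by rw [← h]

lemma nle_trans {a b c : S} (hab : nle a b) (hbc : nle b c) : nle a c := by
  have hab' : a = b * (a⁻¹ * a) := hab
  have hbc' : b = c * (b⁻¹ * b) := hbc
  have : a = c * ((b⁻¹ * b) * (a⁻¹ * a)) := by
    calc a = b * (a⁻¹ * a) := hab'
      _ = (c * (b⁻¹ * b)) * (a⁻¹ * a) := by rw [← hbc']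
      _ = c * ((b⁻¹ * b) * (a⁻¹ * a)) := by rw [mul_assoc]
  exact nle_of_mul_idem (idem_mul (idem_inv_mul b) (idem_inv_mul a)) this

lemma nle_antisymm {a b : S} (hab : nle a b) (hba : nle b a) : a = b := by
  have hab' : a = b * (a⁻¹ * a) := hab
  have hba' : b = a * (b⁻¹ * b) := hba
  calc a = b * (a⁻¹ * a) := hab'
    _ = (a * (b⁻¹ * b)) * (a⁻¹ * a) := by rw [← hba']
    _ = a * ((b⁻¹ * b) * (a⁻¹ * a)) := by rw [mul_assoc]
    _ = a * ((a⁻¹ * a) * (b⁻¹ * b)) := by rw [idem_comm (idem_inv_mul b) (idem_inv_mul a)]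
    _ = (a * (a⁻¹ * a)) * (b⁻¹ * b) := by simp only [mul_assoc]
    _ = a * (b⁻¹ * b) := by rw [← mul_assoc a a⁻¹ a, mim]
    _ = b := hba'.symm

lemma nle_mul {a b c d : S} (hab : nle a b) (hcd : nle c d) :
    nle (a * c) (b * d) := by
  have hab' : a = b * (a⁻¹ * a) := hab
  have hcd' : c = d * (c⁻¹ * c) := hcd
  have key : a * c = (b * d) * ((d⁻¹ * ((a⁻¹ * a) * d)) * (c⁻¹ * c)) := by
    calc a * c = (b * (a⁻¹ * a)) * (d * (c⁻¹ * c)) := by rw [← hab', ← hcd']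
      _ = b * ((a⁻¹ * a) * d * (c⁻¹ * c)) := by simp only [mul_assoc]
      _ = b * ((d * (d⁻¹ * ((a⁻¹ * a) * d))) * (c⁻¹ * c)) := by
          rw [← idem_swap_right (idem_inv_mul a) d]
      _ = (b * d) * ((d⁻¹ * ((a⁻¹ * a) * d)) * (c⁻¹ * c)) := by simp only [mul_assoc]
  have hg1 : IsIdempotentElem (d⁻¹ * ((a⁻¹ * a) * d)) := by
    have := idem_conj (idem_inv_mul a) d⁻¹
    rwa [inv_inv'] at this
  exact nle_of_mul_idem (idem_mul hg1 (idem_inv_mul c)) key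

lemma nle_inv {a b : S} (hab : nle a b) : nle a⁻¹ b⁻¹ := by
  have hab' : a = b * (a⁻¹ * a) := hab
  have : a⁻¹ = (a⁻¹ * a) * b⁻¹ := by
    calc a⁻¹ = (b * (a⁻¹ * a))⁻¹ := by rw [← hab']
      _ = (a⁻¹ * a)⁻¹ * b⁻¹ := mul_inv_rev' _ _
      _ = (a⁻¹ * a) * b⁻¹ := by rw [idem_inv (idem_inv_mul a)]
  exact nle_of_idem_mul (idem_inv_mul a) this

end IS

section ISZ
variable [InverseSemigroupWithZero S]

lemma zero_inv' : (0 : S)⁻¹ = 0 := by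
  have h : (0 : S) * 0 * 0 = 0 := by
    rw [InverseSemigroupWithZero.zero_mul, InverseSemigroupWithZero.zero_mul]
  exact (InverseSemigroup.inv_unique (0 : S) 0 h h).symm

lemma nle_zero (a : S) : nle 0 a := by
  show (0 : S) = a * ((0 : S)⁻¹ * 0)
  rw [zero_inv', InverseSemigroupWithZero.zero_mul, InverseSemigroupWithZero.mul_zero]

end ISZ

section IS2
variable [InverseSemigroup S]

lemma join_unique {u u' a b : S} (h : isJoin u a b) (h' : isJoin u' a b) : u = u' :=
  nle_antisymm (h.2.2 u' h'.1 h'.2.1) (h'.2.2 u h.1 h.2.1)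

lemma join_self_of_nle {a b : S} (h : nle a b) : isJoin b a b :=
  ⟨h, nle_refl b, fun _ _ hb => hb⟩

lemma join_inv {u a b : S} (h : isJoin u a b) : isJoin u⁻¹ a⁻¹ b⁻¹ := by
  refine ⟨nle_inv h.1, nle_inv h.2.1, fun c hac hbc => ?_⟩
  have h1 : nle a c⁻¹ := by have := nle_inv hac; rwa [inv_inv'] at this
  have h2 : nle b c⁻¹ := by have := nle_inv hbc; rwa [inv_inv'] at this
  have := nle_inv (h.2.2 c⁻¹ h1 h2)
  rwa [inv_inv'] at this

end IS2

section ISZ2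
variable [InverseSemigroupWithZero S]

lemma join_zero_left {u a : S} (h : isJoin u 0 a) : u = a :=
  join_unique h (join_self_of_nle (nle_zero a))

lemma join_zero_zero {u : S} (h : isJoin u 0 (0 : S)) : u = 0 :=
  join_zero_left h

end ISZ2

section DIS
variable [DistributiveInverseSemigroup S]

lemma diff_nle {c c' a b : S} (h : isDiff c a b) (h' : isDiff c' a b) : nle c c' := by
  obtain ⟨hca, ⟨hcb1, hcb2⟩, _⟩ := h
  obtain ⟨_, _, hjoin'⟩ := h'
  -- b * c⁻¹ = 0
  have hbc : b * c⁻¹ = 0 := by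
    rw [show b * c⁻¹ = (c * b⁻¹)⁻¹ by rw [mul_inv_rev', inv_inv'], hcb2, zero_inv']
  have hj2 := DistributiveInverseSemigroup.mul_join_right b c' a (c⁻¹ * c) hjoin'
  have e1 : a * (c⁻¹ * c) = c := hca.symm
  have e2 : b * (c⁻¹ * c) = 0 := by
    rw [← mul_assoc, hbc, InverseSemigroupWithZero.zero_mul]
  rw [e1, e2] at hj2
  have := join_zero_left hj2
  exact this

lemma diff_unique {c c' a b : S} (h : isDiff c a b) (h' : isDiff c' a b) : c = c' :=
  nle_antisymm (diff_nle h h') (diff_nle h' h)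

end DIS

end BISAux

end Lemmas

open BISAux

/-- In a Boolean inverse semigroup, `(s ∖ t)(u ∖ v) = s u ∖ (s v ∨ t u)` for
`t ≤ s` and `v ≤ u`. -/
theorem stmt8 {S : Type*} [BooleanInverseSemigroup S] (s t u v c1 c2 j c3 : S)
    (hts : nle t s) (hvu : nle v u)
    (h1 : isDiff c1 s t) (h2 : isDiff c2 u v)
    (hj : isJoin j (s * v) (t * u)) (h3 : isDiff c3 (s * u) j) :
    c1 * c2 = c3 := by
  obtain ⟨hc1s, ⟨hc1t1, hc1t2⟩, hJ1⟩ := h1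
  obtain ⟨hc2u, ⟨hc2v1, hc2v2⟩, hJ2⟩ := h2
  -- c1 * c2 ≤ s * u
  have hle : nle (c1 * c2) (s * u) := nle_mul hc1s hc2u
  -- (A) (c1*c2)⁻¹ * (s*v) = 0
  have hc1inv : c1⁻¹ = (c1⁻¹ * c1) * s⁻¹ := by
    conv_lhs => rw [hc1s]
    rw [mul_inv_rev', idem_inv (idem_inv_mul c1)]
  have he : IsIdempotentElem (c1⁻¹ * s) := by
    have : c1⁻¹ * s = (c1⁻¹ * c1) * (s⁻¹ * s) := by
      conv_lhs => rw [hc1inv]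
      simp only [mul_assoc]
    rw [this]
    exact idem_mul (idem_inv_mul c1) (idem_inv_mul s)
  have hA : (c1 * c2)⁻¹ * (s * v) = 0 := by
    rw [mul_inv_rev']
    calc (c2⁻¹ * c1⁻¹) * (s * v)
        = c2⁻¹ * ((c1⁻¹ * s) * v) := by simp only [mul_assoc]
      _ = c2⁻¹ * (v * (v⁻¹ * ((c1⁻¹ * s) * v))) := by rw [← idem_swap_right he v]
      _ = (c2⁻¹ * v) * (v⁻¹ * ((c1⁻¹ * s) * v)) := by simp only [mul_assoc]
      _ = 0 := by rw [hc2v1, InverseSemigroupWithZero.zero_mul]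
  -- (B) (c1*c2) * (s*v)⁻¹ = 0
  have hB : (c1 * c2) * (s * v)⁻¹ = 0 := by
    rw [mul_inv_rev']
    calc (c1 * c2) * (v⁻¹ * s⁻¹)
        = c1 * ((c2 * v⁻¹) * s⁻¹) := by simp only [mul_assoc]
      _ = 0 := by
          rw [hc2v2, InverseSemigroupWithZero.zero_mul,
            InverseSemigroupWithZero.mul_zero]
  -- (C) (c1*c2)⁻¹ * (t*u) = 0
  have hC : (c1 * c2)⁻¹ * (t * u) = 0 := by
    rw [mul_inv_rev']
    calc (c2⁻¹ * c1⁻¹) * (t * u)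
        = c2⁻¹ * ((c1⁻¹ * t) * u) := by simp only [mul_assoc]
      _ = 0 := by
          rw [hc1t1, InverseSemigroupWithZero.zero_mul,
            InverseSemigroupWithZero.mul_zero]
  -- (D) (c1*c2) * (t*u)⁻¹ = 0
  have hf : IsIdempotentElem (c2 * u⁻¹) := by
    have : c2 * u⁻¹ = u * ((c2⁻¹ * c2) * u⁻¹) := by
      conv_lhs => rw [hc2u]
      simp only [mul_assoc]
    rw [this]
    exact idem_conj (idem_inv_mul c2) u
  have hD : (c1 * c2) * (t * u)⁻¹ = 0 := by
    rw [mul_inv_rev']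
    calc (c1 * c2) * (u⁻¹ * t⁻¹)
        = (c1 * (c2 * u⁻¹)) * t⁻¹ := by simp only [mul_assoc]
      _ = ((c1 * ((c2 * u⁻¹) * c1⁻¹)) * c1) * t⁻¹ := by
          rw [← idem_swap_left hf c1]
      _ = (c1 * ((c2 * u⁻¹) * c1⁻¹)) * (c1 * t⁻¹) := by simp only [mul_assoc]
      _ = 0 := by rw [hc1t2, InverseSemigroupWithZero.mul_zero]
  -- orthogonality with j
  have horthL : (c1 * c2)⁻¹ * j = 0 := by
    have hjl := DistributiveInverseSemigroup.mul_join_left (s * v) (t * u) j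
      ((c1 * c2)⁻¹) hj
    rw [hA, hC] at hjl
    exact join_zero_zero hjl
  have horthR : (c1 * c2) * j⁻¹ = 0 := by
    have hjinv := join_inv hj
    have hjl := DistributiveInverseSemigroup.mul_join_left ((s * v)⁻¹) ((t * u)⁻¹)
      j⁻¹ (c1 * c2) hjinv
    rw [hB, hD] at hjl
    exact join_zero_zero hjl
  -- join part: isJoin (s*u) j (c1*c2)
  have hjoin : isJoin (s * u) j (c1 * c2) := by
    refine ⟨hj.2.2 (s * u) (nle_mul (nle_refl s) hvu) (nle_mul hts (nle_refl u)),
      hle, fun c hjc hcc => ?_⟩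
    have hsv_c : nle (s * v) c := nle_trans hj.1 hjc
    have htu_c : nle (t * u) c := nle_trans hj.2.1 hjc
    have JC := DistributiveInverseSemigroup.mul_join_right t c1 s v hJ1
    have hc1v_c : nle (c1 * v) c := nle_trans JC.2.1 hsv_c
    have JB := DistributiveInverseSemigroup.mul_join_left v c2 u c1 hJ2
    have hc1u_c : nle (c1 * u) c := JB.2.2 c hc1v_c hcc
    have JA := DistributiveInverseSemigroup.mul_join_right t c1 s u hJ1
    exact JA.2.2 c htu_c hc1u_c
  exact diff_unique ⟨hle, ⟨horthL, horthR⟩, hjoin⟩ h3
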